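/- Let Ω ⊂ ℝⁿ be a bounded open set with C¹ boundary Γ = ∂Ω, with outer unit normal ν, and let γ : Γ → ℝⁿ be continuous with ν(x)·γ(x) ≥ δ₀ > 0 for all x ∈ Γ. Suppose (η, v, l) solves the Skorokhod problem: η is locally absolutely continuous with η(t) ∈ Ω̄ for all t ≥ 0, η̇(t) + l(t)γ(η(t)) = v(t) a.e., l(t) ≥ 0 a.e., and l(t) = 0 for a.e. t with η(t) ∈ Ω. Then l(t) ≤ δ₀⁻¹ |v(t)| for a.e. t ≥ 0, and |η̇(t)| ≤ (1 + ‖γ‖_∞/δ₀) |v(t)| for a.e. t ≥ 0. -/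

import Mathlib

open MeasureTheory Filter Metric intervalIntegral Topology

theorem my_ae_hasDerivAt {E : Type*} [NormedAddCommGroup E] [NormedSpace ℝ E] [CompleteSpace E]
    (g : ℝ → E) (hg : Integrable g) :
    ∀ᵐ x ∂(volume : Measure ℝ), HasDerivAt (fun t => ∫ s in (0:ℝ)..t, g s) (g x) x := by
  filter_upwards [IsUnifLocDoublingMeasure.ae_tendsto_average_norm_sub (μ := volume)
    (hg.locallyIntegrable) (K := 1)] with x hx
  have key : Tendsto (fun h : ℝ => ⨍ y in closedBall x |h|, ‖g y - g x‖) (𝓝[≠] 0) (𝓝 0) := by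
    apply hx (fun _ => x) (fun h => |h|) tendsto_abs_nhdsNE_zero
    filter_upwards with h
    simp [abs_nonneg]
  rw [hasDerivAt_iff_tendsto]
  rw [← nhdsNE_sup_pure, tendsto_sup]
  constructor
  · apply squeeze_zero' (g := fun x' => 2 * ⨍ y in closedBall x |x' - x|, ‖g y - g x‖)
    · filter_upwards with x' using by positivity
    · filter_upwards [self_mem_nhdsWithin] with x' (hx' : x' ≠ x)
      have hgx : IntegrableOn (fun y => ‖g y - g x‖) (closedBall x |x' - x|) :=
        ((hg.integrableOn).sub (integrableOn_const
          measure_closedBall_lt_top.ne enorm_ne_top)).norm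
      have hsub : x' - x ≠ 0 := sub_ne_zero.mpr hx'
      have hii : ∀ a b : ℝ, IntervalIntegrable g volume a b := fun a b =>
        hg.intervalIntegrable
      have e1 : (∫ s in (0:ℝ)..x', g s) - (∫ s in (0:ℝ)..x, g s) = ∫ s in x..x', g s := by
        rw [← integral_add_adjacent_intervals (hii 0 x) (hii x x')]; abel
      have e2 : (x' - x) • g x = ∫ s in x..x', g x :=
        (intervalIntegral.integral_const _).symm
      rw [e1, e2, ← integral_sub (hii x x') intervalIntegrable_const]
      have hI : ∀ y ∈ Set.uIoc x x', y ∈ closedBall x |x' - x| := by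
        intro y hy
        rcases Set.mem_uIoc.mp hy with h | h
        · rw [mem_closedBall, Real.dist_eq, abs_of_nonneg (by linarith [h.1] : (0:ℝ) ≤ y - x)]
          calc y - x ≤ x' - x := by linarith [h.2]
            _ ≤ |x' - x| := le_abs_self _
        · rw [mem_closedBall, Real.dist_eq, abs_of_nonpos (by linarith [h.2] : y - x ≤ 0)]
          calc -(y - x) ≤ -(x' - x) := by linarith [h.1]
            _ ≤ |x' - x| := neg_le_abs _
      have step1 : ‖∫ s in x..x', (g s - g x)‖ ≤ ∫ y in Set.uIoc x x', ‖g y - g x‖ :=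
        intervalIntegral.norm_integral_le_integral_norm_uIoc
      have step2 : (∫ y in Set.uIoc x x', ‖g y - g x‖) ≤
          ∫ y in closedBall x |x' - x|, ‖g y - g x‖ := by
        apply setIntegral_mono_set hgx
        · filter_upwards with y using norm_nonneg _
        · exact HasSubset.Subset.eventuallyLE hI
      have hvol : (volume (closedBall x |x' - x|)).toReal = 2 * |x' - x| := by
        rw [Real.volume_closedBall, ENNReal.toReal_ofReal (by positivity)]
      have step3 : (∫ y in closedBall x |x' - x|, ‖g y - g x‖) =
          2 * |x' - x| * ⨍ y in closedBall x |x' - x|, ‖g y - g x‖ := by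
        rw [average_eq, smul_eq_mul, measureReal_restrict_apply_univ, measureReal_def, hvol]
        field_simp
      have habs : ‖x' - x‖ = |x' - x| := rfl
      calc ‖x' - x‖⁻¹ * ‖∫ s in x..x', (g s - g x)‖
          ≤ ‖x' - x‖⁻¹ * (2 * |x' - x| * ⨍ y in closedBall x |x' - x|, ‖g y - g x‖) := by
            apply mul_le_mul_of_nonneg_left _ (by positivity)
            exact step1.trans (step2.trans_eq step3)
        _ = 2 * ⨍ y in closedBall x |x' - x|, ‖g y - g x‖ := by
            rw [habs]; field_simp
    · have h1 : Tendsto (fun x' : ℝ => x' - x) (𝓝[≠] x) (𝓝 0) :=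
        tendsto_sub_nhds_zero_iff.mpr (tendsto_id.mono_left nhdsWithin_le_nhds)
      have h2 : Tendsto (fun x' : ℝ => x' - x) (𝓝[≠] x) (𝓝[≠] 0) :=
        tendsto_nhdsWithin_of_tendsto_nhds_of_eventually_within _ h1
          (by filter_upwards [self_mem_nhdsWithin] with y (hy : y ≠ x)
              exact sub_ne_zero.mpr hy)
      have := key.comp h2
      simpa using this.const_mul 2
  · have hzero : (fun x' => ‖x' - x‖⁻¹ *
        ‖(∫ s in (0:ℝ)..x', g s) - (∫ s in (0:ℝ)..x, g s) - (x' - x) • g x‖) x = 0 := by simp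
    rw [tendsto_pure_left]
    intro s hs
    simp only [hzero] at *
    exact mem_of_mem_nhds (by simpa using hs)

theorem my_ae_eta_deriv {E : Type*} [NormedAddCommGroup E] [NormedSpace ℝ E] [CompleteSpace E]
    (η η' : ℝ → E)
    (hint : ∀ T : ℝ, 0 ≤ T → IntegrableOn η' (Set.Icc 0 T))
    (hAC : ∀ t : ℝ, 0 ≤ t → η t = η 0 + ∫ s in (0:ℝ)..t, η' s) :
    ∀ᵐ x ∂(volume : Measure ℝ), 0 < x → HasDerivAt η (η' x) x := by
  have main : ∀ T : ℕ, ∀ᵐ x ∂(volume : Measure ℝ),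
      x ∈ Set.Ioo (0:ℝ) (T+1) → HasDerivAt η (η' x) x := by
    intro T
    set g : ℝ → E := (Set.Icc (0:ℝ) (T+1)).indicator η' with hg
    have hgi : Integrable g := (hint (T+1) (by positivity)).integrable_indicator
      measurableSet_Icc
    filter_upwards [my_ae_hasDerivAt g hgi] with x hx hxmem
    have heq : Set.EqOn η (fun t => η 0 + ∫ s in (0:ℝ)..t, g s) (Set.Ioo (0:ℝ) (T+1)) := by
      intro t ht
      have ht0 : (0:ℝ) ≤ t := ht.1.le
      have : (∫ s in (0:ℝ)..t, g s) = ∫ s in (0:ℝ)..t, η' s := by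
        apply intervalIntegral.integral_congr
        intro s hs
        rw [Set.uIcc_of_le ht0] at hs
        exact Set.indicator_of_mem (Set.mem_Icc.mpr ⟨hs.1, hs.2.trans ht.2.le⟩) η'
      show η t = η 0 + ∫ s in (0:ℝ)..t, g s
      rw [this, ← hAC t ht0]
    have hxg : g x = η' x := Set.indicator_of_mem (Set.mem_Icc.mpr ⟨hxmem.1.le, hxmem.2.le⟩) η'
    have hd : HasDerivAt (fun t => η 0 + ∫ s in (0:ℝ)..t, g s) (η' x) x := by
      rw [← hxg]; exact (hx.const_add (η 0))
    apply hd.congr_of_eventuallyEq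
    filter_upwards [isOpen_Ioo.mem_nhds hxmem] with t ht using heq ht
  rw [← ae_all_iff] at main
  filter_upwards [main] with x hx hpos
  obtain ⟨T, hT⟩ := exists_nat_gt x
  exact hx T ⟨hpos, by push_cast; linarith⟩

theorem stmt_7 (n : ℕ)
    (Ω : Set (EuclideanSpace ℝ (Fin n))) (hΩ : IsOpen Ω)
    (hb : Bornology.IsBounded Ω) (hne : Ω.Nonempty)
    (ψ : EuclideanSpace ℝ (Fin n) → ℝ) (hψ : ContDiff ℝ 1 ψ)
    (hΩψ : Ω = {x | ψ x < 0})
    (hgrad : ∀ x ∈ frontier Ω, gradient ψ x ≠ 0)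
    (ν : EuclideanSpace ℝ (Fin n) → EuclideanSpace ℝ (Fin n))
    (hν : ∀ x ∈ frontier Ω, ν x = ‖gradient ψ x‖⁻¹ • gradient ψ x)
    (γ : EuclideanSpace ℝ (Fin n) → EuclideanSpace ℝ (Fin n))
    (hγ : ContinuousOn γ (frontier Ω))
    (δ₀ : ℝ) (hδ₀ : 0 < δ₀)
    (hobl : ∀ x ∈ frontier Ω, δ₀ ≤ (inner ℝ (ν x) (γ x) : ℝ))
    (Cγ : ℝ) (hCγ : Cγ = sSup ((fun x => ‖γ x‖) '' frontier Ω))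
    (η η' v : ℝ → EuclideanSpace ℝ (Fin n)) (l : ℝ → ℝ)
    (hmem : ∀ t : ℝ, 0 ≤ t → η t ∈ closure Ω)
    (hint : ∀ T : ℝ, 0 ≤ T → IntegrableOn η' (Set.Icc 0 T))
    (hAC : ∀ t : ℝ, 0 ≤ t → η t = η 0 + ∫ s in (0:ℝ)..t, η' s)
    (hode : ∀ᵐ s ∂volume, 0 ≤ s → η' s + l s • γ (η s) = v s)
    (hl : ∀ᵐ s ∂volume, 0 ≤ s → 0 ≤ l s)
    (hl0 : ∀ᵐ s ∂volume, 0 ≤ s → η s ∈ Ω → l s = 0) :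
    (∀ᵐ s ∂volume, 0 ≤ s → l s ≤ δ₀⁻¹ * ‖v s‖) ∧
    (∀ᵐ s ∂volume, 0 ≤ s → ‖η' s‖ ≤ (1 + Cγ / δ₀) * ‖v s‖) := by
  -- basic facts about Cγ
  have hfc : IsCompact (frontier Ω) :=
    Metric.isCompact_of_isClosed_isBounded isClosed_frontier
      (hb.closure.subset frontier_subset_closure)
  have hbdd : BddAbove ((fun x => ‖γ x‖) '' frontier Ω) :=
    (hfc.image_of_continuousOn hγ.norm).bddAbove
  have hCub : ∀ x ∈ frontier Ω, ‖γ x‖ ≤ Cγ := fun x hx =>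
    hCγ ▸ le_csSup hbdd ⟨x, hx, rfl⟩
  have hC0 : 0 ≤ Cγ := by
    rcases (frontier Ω).eq_empty_or_nonempty with h | ⟨x, hx⟩
    · simp [hCγ, h, Real.sSup_empty]
    · exact (norm_nonneg (γ x)).trans (hCub x hx)
  -- ψ ≤ 0 on the closure
  have hψle : ∀ t : ℝ, 0 ≤ t → ψ (η t) ≤ 0 := by
    intro t ht
    have h1 : closure Ω ⊆ {x | ψ x ≤ 0} := by
      apply closure_minimal
      · rw [hΩψ]; exact fun x hx => show ψ x ≤ 0 from le_of_lt hx
      · exact isClosed_le (hψ.continuous) continuous_const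
    exact h1 (hmem t ht)
  -- ν is a unit vector on the frontier
  have hνunit : ∀ x ∈ frontier Ω, ‖ν x‖ = 1 := by
    intro x hx
    rw [hν x hx, norm_smul, norm_inv, norm_norm,
      inv_mul_cancel₀ (norm_ne_zero_iff.mpr (hgrad x hx))]
  have h0 : ∀ᵐ s : ℝ ∂volume, s ≠ 0 := by
    rw [ae_iff]
    have : {a : ℝ | ¬ a ≠ 0} = {0} := by ext a; simp
    rw [this]
    exact Real.volume_singleton
  have key : ∀ᵐ s ∂(volume : Measure ℝ), 0 ≤ s →
      (l s ≤ δ₀⁻¹ * ‖v s‖ ∧ ‖η' s‖ ≤ (1 + Cγ / δ₀) * ‖v s‖) := by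
    filter_upwards [hode, hl, hl0, h0, my_ae_eta_deriv η η' hint hAC]
      with s heq hls himp hsne hder hs0
    have hspos : 0 < s := lt_of_le_of_ne hs0 (Ne.symm hsne)
    replace heq := heq hs0
    replace hls := hls hs0
    have hd := hder hspos
    have hgb : l s * ‖γ (η s)‖ ≤ δ₀⁻¹ * ‖v s‖ * Cγ ∧ l s ≤ δ₀⁻¹ * ‖v s‖ := by
      by_cases hmemΩ : η s ∈ Ω
      · have hl0' := himp hs0 hmemΩ
        rw [hl0']
        constructor
        · simp only [zero_mul]; positivity
        · positivity
      · have hfr : η s ∈ frontier Ω := by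
          rw [frontier, hΩ.interior_eq]
          exact ⟨hmem s hs0, hmemΩ⟩
        have hψs : ψ (η s) = 0 := by
          refine le_antisymm (hψle s hs0) ?_
          by_contra h
          exact hmemΩ (hΩψ ▸ (lt_of_not_ge h : ψ (η s) < 0))
        -- derivative of ψ ∘ η at s is zero
        have hψd : HasFDerivAt ψ (fderiv ℝ ψ (η s)) (η s) :=
          (hψ.differentiable one_ne_zero (η s)).hasFDerivAt
        have hcomp : HasDerivAt (fun t => ψ (η t)) (fderiv ℝ ψ (η s) (η' s)) s :=
          hψd.comp_hasDerivAt s hd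
        have hmax : IsLocalMax (fun t => ψ (η t)) s := by
          filter_upwards [eventually_gt_nhds hspos] with t ht
          simp only [hψs]
          exact hψle t ht.le
        have hzero : fderiv ℝ ψ (η s) (η' s) = 0 := hmax.hasDerivAt_eq_zero hcomp
        have hgradinner : (inner ℝ (gradient ψ (η s)) (η' s) : ℝ) = 0 := by
          rw [gradient, InnerProductSpace.toDual_symm_apply]
          exact hzero
        have hinner0 : (inner ℝ (ν (η s)) (η' s) : ℝ) = 0 := by
          rw [hν _ hfr, real_inner_smul_left, hgradinner, mul_zero]
        have hodein : (inner ℝ (ν (η s)) (v s) : ℝ) = l s * inner ℝ (ν (η s)) (γ (η s)) := by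
          rw [← heq, inner_add_right, hinner0, real_inner_smul_right, zero_add]
        have hb2 : (inner ℝ (ν (η s)) (v s) : ℝ) ≤ ‖v s‖ := by
          calc (inner ℝ (ν (η s)) (v s) : ℝ) ≤ ‖ν (η s)‖ * ‖v s‖ := real_inner_le_norm _ _
            _ = ‖v s‖ := by rw [hνunit _ hfr, one_mul]
        have hb1 : δ₀ * l s ≤ ‖v s‖ := by
          have h3 := hobl _ hfr
          nlinarith [hodein ▸ hb2]
        have hlb : l s ≤ δ₀⁻¹ * ‖v s‖ := by
          rw [le_inv_mul_iff₀ hδ₀]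
          exact hb1
        refine ⟨?_, hlb⟩
        calc l s * ‖γ (η s)‖ ≤ (δ₀⁻¹ * ‖v s‖) * Cγ := by
              apply mul_le_mul hlb (hCub _ hfr) (norm_nonneg _) (by positivity)
          _ = δ₀⁻¹ * ‖v s‖ * Cγ := rfl
    refine ⟨hgb.2, ?_⟩
    have hη' : η' s = v s - l s • γ (η s) := by rw [← heq]; abel
    calc ‖η' s‖ = ‖v s - l s • γ (η s)‖ := by rw [hη']
      _ ≤ ‖v s‖ + ‖l s • γ (η s)‖ := norm_sub_le _ _
      _ = ‖v s‖ + l s * ‖γ (η s)‖ := by rw [norm_smul, Real.norm_eq_abs, abs_of_nonneg hls]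
      _ ≤ ‖v s‖ + δ₀⁻¹ * ‖v s‖ * Cγ := by linarith [hgb.1]
      _ = (1 + Cγ / δ₀) * ‖v s‖ := by field_simp
  exact ⟨key.mono fun s hs h0 => (hs h0).1, key.mono fun s hs h0 => (hs h0).2⟩
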